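/- Let G be a group that is nilpotent of class at most 3 (i.e. every triple commutator ⁅⁅x,y⁆,z⁆ lies in the center Z(G)). Then the middle nucleus is contained in the left nucleus of the associated gyrogroup: for every a ∈ G, if (x∘a)∘y = x∘(a∘y) for all x,y ∈ G, then a∘(x∘y) = (a∘x)∘y for all x,y ∈ G, where x∘y = y⁻¹xy². -/

import Mathlib

/-- The gyrogroup operation associated with a group: `x ∘ y = y⁻¹ * x * y²`. -/
def gyrOp {G : Type*} [Group G] (x y : G) : G := y⁻¹ * x * y ^ 2

open scoped commutatorElement

theorem middleNucleus_subset_leftNucleus {G : Type*} [Group G]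
    (h3 : ∀ x y z : G, ⁅⁅x, y⁆, z⁆ ∈ Subgroup.center G) (a : G)
    (ha : ∀ x y : G, gyrOp (gyrOp x a) y = gyrOp x (gyrOp a y)) :
    ∀ x y : G, gyrOp a (gyrOp x y) = gyrOp (gyrOp a x) y := by
  -- key identity derived from the middle-nucleus hypothesis
  have k : ∀ x y : G, x * a = (a * y * a⁻¹ * y⁻¹) * x * (y * a * y⁻¹) := by
    intro x y
    calc x * a
        = a * y⁻¹ * (gyrOp (gyrOp x a) y⁻¹) * y * y * a⁻¹ := by
          simp only [gyrOp, pow_two]; group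
      _ = a * y⁻¹ * (gyrOp x (gyrOp a y⁻¹)) * y * y * a⁻¹ := by rw [ha]
      _ = (a * y * a⁻¹ * y⁻¹) * x * (y * a * y⁻¹) := by
          simp only [gyrOp, pow_two]; group
  -- hence every commutator [a,y] is central
  have hc : ∀ y : G, (a * y * a⁻¹ * y⁻¹) ∈ Subgroup.center G := by
    intro y
    rw [Subgroup.mem_center_iff]
    intro x
    calc x * (a * y * a⁻¹ * y⁻¹)
        = (x * a) * (y * a⁻¹ * y⁻¹) := by group
      _ = ((a * y * a⁻¹ * y⁻¹) * x * (y * a * y⁻¹)) * (y * a⁻¹ * y⁻¹) := by rw [k]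
      _ = (a * y * a⁻¹ * y⁻¹) * x := by group
  intro x y
  have hcy := Subgroup.mem_center_iff.mp (Subgroup.inv_mem _ (hc y))
  have hcx := Subgroup.mem_center_iff.mp (hc x)
  -- reduced form of the goal
  have L : x⁻¹ * (y * a * y⁻¹) * x * (y * x) = y * (x⁻¹ * a * x) * x := by
    calc x⁻¹ * (y * a * y⁻¹) * x * (y * x)
        = (x⁻¹ * (a * y * a⁻¹ * y⁻¹)⁻¹) * (a * x * y * x) := by group
      _ = ((a * y * a⁻¹ * y⁻¹)⁻¹ * x⁻¹) * (a * x * y * x) := by rw [hcy]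
      _ = (a * y * a⁻¹ * y⁻¹)⁻¹ * (x⁻¹ * (a * x * a⁻¹ * x⁻¹)) * (x * a * y * x) := by group
      _ = (a * y * a⁻¹ * y⁻¹)⁻¹ * ((a * x * a⁻¹ * x⁻¹) * x⁻¹) * (x * a * y * x) := by
          rw [hcx]
      _ = ((a * y * a⁻¹ * y⁻¹)⁻¹ * (a * x * a⁻¹ * x⁻¹)) * (a * y * x) := by group
      _ = ((a * x * a⁻¹ * x⁻¹) * (a * y * a⁻¹ * y⁻¹)⁻¹) * (a * y * x) := by
          rw [← hcx]
      _ = (a * x * a⁻¹ * x⁻¹) * ((a * y * a⁻¹ * y⁻¹)⁻¹ * a * y) * x := by group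
      _ = (a * x * a⁻¹ * x⁻¹) * y * (a * x) := by group
      _ = y * (a * x * a⁻¹ * x⁻¹) * (a * x) := by rw [← hcx y]
      _ = y * x⁻¹ * (x * (a * x * a⁻¹ * x⁻¹)) * (a * x) := by group
      _ = y * x⁻¹ * ((a * x * a⁻¹ * x⁻¹) * x) * (a * x) := by rw [hcx x]
      _ = y * (x⁻¹ * a * x) * x := by group
  calc gyrOp a (gyrOp x y)
      = y⁻¹ * y⁻¹ * (x⁻¹ * (y * a * y⁻¹) * x * (y * x)) * (y * y) := by
        simp only [gyrOp, pow_two]; group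
    _ = y⁻¹ * y⁻¹ * (y * (x⁻¹ * a * x) * x) * (y * y) := by rw [L]
    _ = gyrOp (gyrOp a x) y := by simp only [gyrOp, pow_two]; group
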